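/- Let {A_v}_{v∈V} be a finite collection of events in a probability space, where the index set V is the vertex set of a tree G = (V,E) on n > 1 vertices. Then Pr(⋃_{v∈V} A_v) ≥ (1/(n−1)) · ( Σ_{v∈V} Pr(A_v) − Σ_{{v,w}∈E} Pr(A_v ∩ A_w) ). -/

import Mathlib

open MeasureTheory Finset
open scoped Classical

theorem tree_lower_bound_card {Ω V : Type*} [MeasurableSpace Ω] [Fintype V]
    (μ : Measure Ω) [IsProbabilityMeasure μ] (G : SimpleGraph V) (hG : G.IsTree)
    (n : ℕ) (hn : Fintype.card V = n) (hn1 : 1 < n)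
    (A : V → Set Ω) (hA : ∀ v, MeasurableSet (A v)) :
    (μ (⋃ v, A v)).toReal ≥
      (1 / ((n : ℝ) - 1)) *
        (∑ v, (μ (A v)).toReal -
          ∑ e ∈ G.edgeFinset,
            Sym2.lift ⟨fun v w => (μ (A v ∩ A w)).toReal,
              fun v w => by simp [Set.inter_comm]⟩ e) := by
  classical
  set g : V → ℝ := fun v => (μ (A v)).toReal with hg
  set S : ℝ := (μ (⋃ v, A v)).toReal with hS
  have hg0 : ∀ v, 0 ≤ g v := fun v => ENNReal.toReal_nonneg
  have hdeg : ∀ v, 1 ≤ G.degree v := by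
    intro v
    rw [Nat.one_le_iff_ne_zero, ← Nat.pos_iff_ne_zero, G.degree_pos_iff_exists_adj]
    obtain ⟨w, hw⟩ := Fintype.exists_ne_of_one_lt_card (hn ▸ hn1) v
    obtain ⟨p⟩ := hG.isConnected v w
    cases p with
    | nil => exact absurd rfl hw.symm
    | cons h q => exact ⟨_, h⟩
  -- Step A : ∑ g ≤ ∑ over edges of (g v + g w)
  have stepA : ∑ v, g v ≤ ∑ e ∈ G.edgeFinset,
      Sym2.lift ⟨fun v w => g v + g w, fun v w => by dsimp; ring⟩ e := by
    have h1 : ∀ v, g v ≤ (G.degree v : ℝ) * g v := by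
      intro v
      nlinarith [hg0 v, (by exact_mod_cast hdeg v : (1:ℝ) ≤ (G.degree v : ℝ))]
    calc ∑ v, g v ≤ ∑ v, (G.degree v : ℝ) * g v := Finset.sum_le_sum fun v _ => h1 v
      _ = ∑ v, ∑ e ∈ G.edgeFinset, (if v ∈ e then g v else 0) := by
          refine Finset.sum_congr rfl fun v _ => ?_
          rw [Finset.sum_ite, Finset.sum_const, Finset.sum_const_zero, add_zero,
            ← G.incidenceFinset_eq_filter, G.card_incidenceFinset_eq_degree,
            nsmul_eq_mul]
      _ = ∑ e ∈ G.edgeFinset, ∑ v, (if v ∈ e then g v else 0) := Finset.sum_comm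
      _ = _ := by
          refine Finset.sum_congr rfl fun e he => ?_
          induction e with
          | _ a b =>
            have hab : a ≠ b := by
              have := G.not_isDiag_of_mem_edgeFinset he
              simpa using this
            rw [Finset.sum_ite, Finset.sum_const_zero, add_zero]
            have hfil : (Finset.univ.filter (fun v => v ∈ (s(a, b) : Sym2 V))) = ({a, b} : Finset V) := by
              ext x; simp [Sym2.mem_iff]
            rw [hfil, Finset.sum_pair hab, Sym2.lift_mk]
  -- per-edge inequality
  have stepB : ∀ e ∈ G.edgeFinset,
      Sym2.lift ⟨fun v w => g v + g w, fun v w => by dsimp; ring⟩ e -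
        Sym2.lift ⟨fun v w => (μ (A v ∩ A w)).toReal,
          fun v w => by simp [Set.inter_comm]⟩ e ≤ S := by
    intro e he
    induction e with
    | _ a b =>
      simp only [Sym2.lift_mk]
      have hU : μ (A a ∪ A b) + μ (A a ∩ A b) = μ (A a) + μ (A b) :=
        measure_union_add_inter (A a) (hA b)
      have hUfin : μ (A a ∪ A b) ≠ ⊤ := measure_ne_top μ _
      have hIfin : μ (A a ∩ A b) ≠ ⊤ := measure_ne_top μ _
      have h2 : (μ (A a ∪ A b)).toReal + (μ (A a ∩ A b)).toReal
          = g a + g b := by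
        rw [← ENNReal.toReal_add hUfin hIfin, hU,
          ENNReal.toReal_add (measure_ne_top μ _) (measure_ne_top μ _)]
      have h3 : (μ (A a ∪ A b)).toReal ≤ S := by
        refine ENNReal.toReal_mono (measure_ne_top μ _) (measure_mono ?_)
        exact Set.union_subset (Set.subset_iUnion A a) (Set.subset_iUnion A b)
      linarith
  have hcard : (G.edgeFinset.card : ℝ) = (n : ℝ) - 1 := by
    have := hG.card_edgeFinset
    rw [hn] at this
    have : G.edgeFinset.card = n - 1 := by omega
    rw [this]
    have : (1:ℕ) ≤ n := le_of_lt hn1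
    push_cast [Nat.cast_sub this]
    ring
  have hmain : ∑ v, g v - ∑ e ∈ G.edgeFinset,
      Sym2.lift ⟨fun v w => (μ (A v ∩ A w)).toReal,
        fun v w => by simp [Set.inter_comm]⟩ e ≤ ((n : ℝ) - 1) * S := by
    calc ∑ v, g v - _ ≤ (∑ e ∈ G.edgeFinset,
          Sym2.lift ⟨fun v w => g v + g w, fun v w => by dsimp; ring⟩ e) -
          ∑ e ∈ G.edgeFinset, Sym2.lift ⟨fun v w => (μ (A v ∩ A w)).toReal,
            fun v w => by simp [Set.inter_comm]⟩ e := by linarith [stepA]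
      _ = ∑ e ∈ G.edgeFinset, (Sym2.lift ⟨fun v w => g v + g w,
            fun v w => by dsimp; ring⟩ e -
          Sym2.lift ⟨fun v w => (μ (A v ∩ A w)).toReal,
            fun v w => by simp [Set.inter_comm]⟩ e) := (Finset.sum_sub_distrib _ _).symm
      _ ≤ ∑ _e ∈ G.edgeFinset, S := Finset.sum_le_sum stepB
      _ = (G.edgeFinset.card : ℝ) * S := by rw [Finset.sum_const, nsmul_eq_mul]
      _ = ((n : ℝ) - 1) * S := by rw [hcard]
  have hpos : (0:ℝ) < (n : ℝ) - 1 := by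
    have : (1:ℝ) < (n:ℝ) := by exact_mod_cast hn1
    linarith
  rw [ge_iff_le, one_div, inv_mul_le_iff₀ hpos]
  exact hmain
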